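/- arXiv:1408.2277 — 2 statements merged into one kernel-verified Lean document; each statement's English description precedes it below -/
import Mathlib

section
/- For all natural numbers n, the sequence (i_n) satisfies the recurrences i_{4n} = i_n, i_{4n+1} = i_{2n}, i_{4n+2} = -i_{2n}, and i_{4n+3} = i_n. -/
/-- `inv2 n` is the number of inversions in the binary representation of `n`,
i.e. the number of pairs of bit positions `a > b` such that bit `a` of `n` is `1`
and bit `b` of `n` is `0`. -/
def inv2 (n : ℕ) : ℕ :=
  ((Finset.range (n + 1) ×ˢ Finset.range (n + 1)).filter
    (fun p => p.2 < p.1 ∧ n.testBit p.1 = true ∧ n.testBit p.2 = false)).card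

/-- `iSeq n = (-1)^(inv2 n)`. -/
def iSeq (n : ℕ) : ℤ := (-1) ^ inv2 n


lemma le_of_testBit {n a : ℕ} (h : n.testBit a = true) : a ≤ n := by
  by_contra hc
  push_neg at hc
  have : n < 2 ^ a := lt_of_lt_of_le hc (Nat.le_of_lt (Nat.lt_two_pow_self (n := a)))
  simp [Nat.testBit_eq_false_of_lt this] at h

lemma pos_of_testBit {n a : ℕ} (h : n.testBit a = true) : 1 ≤ n := by
  by_contra hc
  push_neg at hc
  interval_cases n
  simp [Nat.zero_testBit] at h

def ones (n : ℕ) : ℕ := ((Finset.range (n + 1)).filter (fun a => n.testBit a = true)).card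

lemma inv2_eq (n m : ℕ) (h : n ≤ m) :
    inv2 n = ((Finset.range (m + 1) ×ˢ Finset.range (m + 1)).filter
      (fun p => p.2 < p.1 ∧ n.testBit p.1 = true ∧ n.testBit p.2 = false)).card := by
  unfold inv2
  congr 1
  ext ⟨a, b⟩
  simp only [Finset.mem_filter, Finset.mem_product, Finset.mem_range]
  constructor
  · rintro ⟨⟨ha, hb⟩, h1, h2, h3⟩
    exact ⟨⟨by omega, by omega⟩, h1, h2, h3⟩
  · rintro ⟨_, h1, h2, h3⟩
    have ha := le_of_testBit h2
    exact ⟨⟨by omega, by omega⟩, h1, h2, h3⟩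

lemma ones_eq (n m : ℕ) (h : n ≤ m) :
    ones n = ((Finset.range (m + 1)).filter (fun a => n.testBit a = true)).card := by
  unfold ones
  congr 1
  ext a
  simp only [Finset.mem_filter, Finset.mem_range]
  constructor
  · rintro ⟨ha, h1⟩; exact ⟨by omega, h1⟩
  · rintro ⟨_, h1⟩; have := le_of_testBit h1; exact ⟨by omega, h1⟩

lemma testBit_two_mul (n k : ℕ) : (2 * n).testBit (k + 1) = n.testBit k := by
  rw [Nat.testBit_succ]
  congr 1
  omega

lemma testBit_two_mul_add_one (n k : ℕ) : (2 * n + 1).testBit (k + 1) = n.testBit k := by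
  rw [Nat.testBit_succ]
  congr 1
  omega

lemma ones_two_mul (n : ℕ) : ones (2 * n) = ones n := by
  rw [ones_eq (2 * n) (2 * n + 1) (by omega), ones]
  apply Finset.card_nbij' (fun a => a - 1) (fun a => a + 1)
  · intro a ha
    simp only [Finset.mem_coe, Finset.mem_filter, Finset.mem_range] at ha ⊢
    obtain ⟨ha1, ha2⟩ := ha
    have hz : a ≠ 0 := by
      rintro rfl
      simp [Nat.testBit_zero, Nat.mul_mod_right] at ha2
    obtain ⟨k, rfl⟩ : ∃ k, a = k + 1 := ⟨a - 1, by omega⟩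
    rw [testBit_two_mul] at ha2
    have := le_of_testBit ha2
    exact ⟨by omega, by simpa using ha2⟩
  · intro a ha
    simp only [Finset.mem_coe, Finset.mem_filter, Finset.mem_range] at ha ⊢
    exact ⟨by omega, by rw [testBit_two_mul]; exact ha.2⟩
  · intro a ha
    simp only [Finset.mem_coe, Finset.mem_filter, Finset.mem_range] at ha
    have hz : a ≠ 0 := by
      rintro rfl
      simp [Nat.testBit_zero, Nat.mul_mod_right] at ha
    beta_reduce; omega
  · intro a _; beta_reduce; omega

lemma ones_two_mul_add_one (n : ℕ) : ones (2 * n + 1) = ones n + 1 := by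
  rw [ones]
  have hsplit : (Finset.range (2 * n + 1 + 1)).filter (fun a => (2 * n + 1).testBit a = true)
      = insert 0 ((Finset.range (2 * n + 1 + 1)).filter
          (fun a => 0 < a ∧ (2 * n + 1).testBit a = true)) := by
    ext a
    simp only [Finset.mem_insert, Finset.mem_filter, Finset.mem_range]
    constructor
    · rintro ⟨ha, hb⟩
      rcases Nat.eq_zero_or_pos a with rfl | hpos
      · exact Or.inl rfl
      · exact Or.inr ⟨ha, hpos, hb⟩
    · rintro (rfl | ⟨ha, _, hb⟩)
      · refine ⟨by omega, ?_⟩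
        simp [Nat.testBit_zero]
      · exact ⟨ha, hb⟩
  rw [hsplit, Finset.card_insert_of_notMem (by simp)]
  congr 1
  rw [ones]
  apply Finset.card_nbij' (fun a => a - 1) (fun a => a + 1)
  · intro a ha
    simp only [Finset.mem_coe, Finset.mem_filter, Finset.mem_range] at ha ⊢
    obtain ⟨ha1, hpos, ha2⟩ := ha
    obtain ⟨k, rfl⟩ : ∃ k, a = k + 1 := ⟨a - 1, by omega⟩
    rw [testBit_two_mul_add_one] at ha2
    have := le_of_testBit ha2
    exact ⟨by omega, by simpa using ha2⟩
  · intro a ha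
    simp only [Finset.mem_coe, Finset.mem_filter, Finset.mem_range] at ha ⊢
    exact ⟨by omega, by omega, by rw [testBit_two_mul_add_one]; exact ha.2⟩
  · intro a ha
    simp only [Finset.mem_coe, Finset.mem_filter, Finset.mem_range] at ha
    beta_reduce; omega
  · intro a _; beta_reduce; omega

lemma inv2_two_mul_add_one (n : ℕ) : inv2 (2 * n + 1) = inv2 n := by
  rw [inv2, inv2]
  apply Finset.card_nbij' (fun p => (p.1 - 1, p.2 - 1)) (fun p => (p.1 + 1, p.2 + 1))
  · rintro ⟨a, b⟩ h
    simp only [Finset.mem_coe, Finset.mem_filter, Finset.mem_product, Finset.mem_range] at h ⊢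
    obtain ⟨⟨ha, hb⟩, hlt, h1, h2⟩ := h
    have hbz : b ≠ 0 := by
      rintro rfl
      simp [Nat.testBit_zero] at h2
    obtain ⟨k, rfl⟩ : ∃ k, b = k + 1 := ⟨b - 1, by omega⟩
    obtain ⟨j, rfl⟩ : ∃ j, a = j + 1 := ⟨a - 1, by omega⟩
    rw [testBit_two_mul_add_one] at h1 h2
    have := le_of_testBit h1
    simp only [Nat.add_sub_cancel]
    exact ⟨⟨by omega, by omega⟩, by omega, h1, h2⟩
  · rintro ⟨a, b⟩ h
    simp only [Finset.mem_coe, Finset.mem_filter, Finset.mem_product, Finset.mem_range] at h ⊢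
    obtain ⟨⟨ha, hb⟩, hlt, h1, h2⟩ := h
    rw [testBit_two_mul_add_one, testBit_two_mul_add_one]
    exact ⟨⟨by omega, by omega⟩, by omega, h1, h2⟩
  · rintro ⟨a, b⟩ h
    simp only [Finset.mem_coe, Finset.mem_filter, Finset.mem_product, Finset.mem_range] at h
    obtain ⟨_, hlt, h1, h2⟩ := h
    have hbz : b ≠ 0 := by
      rintro rfl
      simp [Nat.testBit_zero] at h2
    simp only [Prod.mk.injEq]
    omega
  · rintro ⟨a, b⟩ _
    simp only [Prod.mk.injEq]
    omega

lemma inv2_two_mul (n : ℕ) : inv2 (2 * n) = inv2 n + ones n := by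
  rw [inv2]
  have hsplit : ((Finset.range (2 * n + 1) ×ˢ Finset.range (2 * n + 1)).filter
      (fun p => p.2 < p.1 ∧ (2*n).testBit p.1 = true ∧ (2*n).testBit p.2 = false))
      = ((Finset.range (2 * n + 1) ×ˢ Finset.range (2 * n + 1)).filter
      (fun p => 0 < p.2 ∧ p.2 < p.1 ∧ (2*n).testBit p.1 = true ∧ (2*n).testBit p.2 = false))
      ∪ ((Finset.range (2 * n + 1) ×ˢ Finset.range (2 * n + 1)).filter
      (fun p => p.2 = 0 ∧ 0 < p.1 ∧ (2*n).testBit p.1 = true)) := by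
    ext ⟨a, b⟩
    simp only [Finset.mem_union, Finset.mem_filter, Finset.mem_product, Finset.mem_range]
    constructor
    · rintro ⟨hm, hlt, h1, h2⟩
      rcases Nat.eq_zero_or_pos b with rfl | hpos
      · exact Or.inr ⟨hm, rfl, hlt, h1⟩
      · exact Or.inl ⟨hm, hpos, hlt, h1, h2⟩
    · rintro (⟨hm, _, hlt, h1, h2⟩ | ⟨hm, rfl, hlt, h1⟩)
      · exact ⟨hm, hlt, h1, h2⟩
      · refine ⟨hm, hlt, h1, ?_⟩
        simp [Nat.testBit_zero]
  rw [hsplit, Finset.card_union_of_disjoint]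
  · congr 1
    · -- first part = inv2 n
      rw [inv2]
      apply Finset.card_nbij' (fun p => (p.1 - 1, p.2 - 1)) (fun p => (p.1 + 1, p.2 + 1))
      · rintro ⟨a, b⟩ h
        simp only [Finset.mem_coe, Finset.mem_filter, Finset.mem_product, Finset.mem_range] at h ⊢
        obtain ⟨⟨ha, hb⟩, hpos, hlt, h1, h2⟩ := h
        obtain ⟨k, rfl⟩ : ∃ k, b = k + 1 := ⟨b - 1, by omega⟩
        obtain ⟨j, rfl⟩ : ∃ j, a = j + 1 := ⟨a - 1, by omega⟩
        rw [testBit_two_mul] at h1 h2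
        have := le_of_testBit h1
        simp only [Nat.add_sub_cancel]
        exact ⟨⟨by omega, by omega⟩, by omega, h1, h2⟩
      · rintro ⟨a, b⟩ h
        simp only [Finset.mem_coe, Finset.mem_filter, Finset.mem_product, Finset.mem_range] at h ⊢
        obtain ⟨⟨ha, hb⟩, hlt, h1, h2⟩ := h
        rw [testBit_two_mul, testBit_two_mul]
        exact ⟨⟨by omega, by omega⟩, by omega, by omega, h1, h2⟩
      · rintro ⟨a, b⟩ h
        simp only [Finset.mem_coe, Finset.mem_filter, Finset.mem_product, Finset.mem_range] at h
        simp only [Prod.mk.injEq]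
        omega
      · rintro ⟨a, b⟩ _
        simp only [Prod.mk.injEq]
        omega
    · -- second part = ones n
      rw [ones]
      apply Finset.card_nbij' (fun p => p.1 - 1) (fun a => (a + 1, 0))
      · rintro ⟨a, b⟩ h
        simp only [Finset.mem_coe, Finset.mem_filter, Finset.mem_product, Finset.mem_range] at h ⊢
        obtain ⟨⟨ha, hb⟩, rfl, hpos, h1⟩ := h
        obtain ⟨j, rfl⟩ : ∃ j, a = j + 1 := ⟨a - 1, by omega⟩
        rw [testBit_two_mul] at h1
        have := le_of_testBit h1
        simp only [Finset.mem_filter, Finset.mem_range, Nat.add_sub_cancel]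
        exact ⟨by omega, h1⟩
      · intro a ha
        simp only [Finset.mem_coe, Finset.mem_filter, Finset.mem_range] at ha
        simp only [Finset.mem_coe, Finset.mem_filter, Finset.mem_product, Finset.mem_range]
        have hn := pos_of_testBit ha.2
        exact ⟨⟨by omega, by omega⟩, by trivial, by omega, by rw [testBit_two_mul]; exact ha.2⟩
      · rintro ⟨a, b⟩ h
        simp only [Finset.mem_coe, Finset.mem_filter, Finset.mem_product, Finset.mem_range] at h
        obtain ⟨_, rfl, hpos, _⟩ := h
        simp only [Prod.mk.injEq]
        exact ⟨by omega, by trivial⟩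
      · intro a _; beta_reduce; omega
  · rw [Finset.disjoint_left]
    rintro ⟨a, b⟩ h1 h2
    simp only [Finset.mem_filter, Finset.mem_product, Finset.mem_range] at h1 h2
    omega

theorem iSeq_four_mul_recurrences (n : ℕ) :
    iSeq (4 * n) = iSeq n ∧ iSeq (4 * n + 1) = iSeq (2 * n) ∧
      iSeq (4 * n + 2) = -iSeq (2 * n) ∧ iSeq (4 * n + 3) = iSeq n := by
  have h4 : (4 : ℕ) * n = 2 * (2 * n) := by ring
  have h41 : 4 * n + 1 = 2 * (2 * n) + 1 := by ring
  have h42 : 4 * n + 2 = 2 * (2 * n + 1) := by ring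
  have h43 : 4 * n + 3 = 2 * (2 * n + 1) + 1 := by ring
  refine ⟨?_, ?_, ?_, ?_⟩
  · rw [iSeq, iSeq, h4, inv2_two_mul, inv2_two_mul, ones_two_mul, pow_add, pow_add]
    have : ((-1 : ℤ)) ^ ones n * (-1) ^ ones n = 1 := by
      rw [← pow_add, Even.neg_one_pow ⟨ones n, rfl⟩]
    rw [mul_assoc, this, mul_one]
  · rw [iSeq, iSeq, h41, inv2_two_mul_add_one]
  · rw [iSeq, iSeq, h42, inv2_two_mul, inv2_two_mul_add_one, ones_two_mul_add_one, inv2_two_mul]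
    ring
  · rw [iSeq, iSeq, h43, inv2_two_mul_add_one, inv2_two_mul_add_one]
end

section
/- For every positive integer n, (S(n) - 2)/2 ≤ S(⌊n/4⌋) ≤ (S(n) + 2)/2. -/
open Finset

/-- The summatory function `S N = ∑_{0 ≤ n ≤ N} iSeq n`. -/
def S (N : ℕ) : ℤ := ∑ n ∈ Finset.range (N + 1), iSeq n

section Aux
def C (n M : ℕ) : ℕ :=
  ((Finset.range M ×ˢ Finset.range M).filter
    (fun p => p.2 < p.1 ∧ n.testBit p.1 = true ∧ n.testBit p.2 = false)).card
def Z (n M : ℕ) : ℕ := ((Finset.range M).filter (fun i => n.testBit i = true)).card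
lemma testBit_two_mul_zero (k : ℕ) : (2 * k).testBit 0 = false := by
  simp [Nat.testBit_zero, Nat.mul_mod_right]
lemma testBit_two_mul_succ (k i : ℕ) : (2 * k).testBit (i + 1) = k.testBit i := by
  rw [Nat.testBit_succ]; congr 1; omega
lemma testBit_two_mul_add_one_zero (k : ℕ) : (2 * k + 1).testBit 0 = true := by
  simp [Nat.testBit_zero, Nat.mul_add_mod]
lemma testBit_two_mul_add_one_succ (k i : ℕ) : (2 * k + 1).testBit (i + 1) = k.testBit i := by
  rw [Nat.testBit_succ]; congr 1; omega

lemma C_odd (k M : ℕ) : C (2 * k + 1) (M + 1) = C k M := by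
  unfold C
  apply Finset.card_nbij' (fun p => (p.1 - 1, p.2 - 1)) (fun p => (p.1 + 1, p.2 + 1))
  · intro p h; obtain ⟨a, b⟩ := p
    simp only [Finset.mem_coe, mem_filter, mem_product, mem_range] at h ⊢
    obtain ⟨⟨ha, hb⟩, hba, hta, htb⟩ := h
    have hbne : b ≠ 0 := by
      rintro rfl
      rw [testBit_two_mul_add_one_zero] at htb; simp at htb
    have h1 : (2 * k + 1).testBit a = k.testBit (a - 1) := by
      conv_lhs => rw [show a = (a - 1) + 1 by omega]
      exact testBit_two_mul_add_one_succ k (a - 1)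
    have h2 : (2 * k + 1).testBit b = k.testBit (b - 1) := by
      conv_lhs => rw [show b = (b - 1) + 1 by omega]
      exact testBit_two_mul_add_one_succ k (b - 1)
    rw [h1] at hta; rw [h2] at htb
    exact ⟨⟨by omega, by omega⟩, by omega, hta, htb⟩
  · intro p h; obtain ⟨a, b⟩ := p
    simp only [Finset.mem_coe, mem_filter, mem_product, mem_range] at h ⊢
    obtain ⟨⟨ha, hb⟩, hba, hta, htb⟩ := h
    rw [← testBit_two_mul_add_one_succ k a] at hta
    rw [← testBit_two_mul_add_one_succ k b] at htb
    exact ⟨⟨by omega, by omega⟩, by omega, hta, htb⟩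
  · intro p h; obtain ⟨a, b⟩ := p
    simp only [Finset.mem_coe, mem_filter, mem_product, mem_range] at h
    obtain ⟨⟨ha, hb⟩, hba, hta, htb⟩ := h
    have hbne : b ≠ 0 := by
      rintro rfl
      rw [testBit_two_mul_add_one_zero] at htb; simp at htb
    simp only [Prod.mk.injEq]
    omega
  · rintro ⟨a, b⟩ _
    simp only [Prod.mk.injEq]
    omega

lemma C_even (k M : ℕ) : C (2 * k) (M + 1) = C k M + Z k M := by
  unfold C
  rw [← Finset.card_filter_add_card_filter_not (s := (Finset.range (M+1) ×ˢ Finset.range (M+1)).filter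
    (fun p => p.2 < p.1 ∧ (2*k).testBit p.1 = true ∧ (2*k).testBit p.2 = false)) (fun p => p.2 = 0)]
  have hz : ((((Finset.range (M+1) ×ˢ Finset.range (M+1)).filter
      (fun p => p.2 < p.1 ∧ (2*k).testBit p.1 = true ∧ (2*k).testBit p.2 = false)).filter
      (fun p => p.2 = 0)).card) = Z k M := by
    unfold Z
    apply Finset.card_nbij' (fun p => p.1 - 1) (fun i => (i + 1, 0))
    · intro p h; obtain ⟨a, b⟩ := p
      simp only [Finset.mem_coe, mem_filter, mem_product, mem_range] at h ⊢
      obtain ⟨⟨⟨ha, hb⟩, hba, hta, htb⟩, hb0⟩ := h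
      subst hb0
      have h1 : (2 * k).testBit a = k.testBit (a - 1) := by
        conv_lhs => rw [show a = (a - 1) + 1 by omega]
        exact testBit_two_mul_succ k (a - 1)
      rw [h1] at hta
      exact ⟨by omega, hta⟩
    · intro i hi
      simp only [Finset.mem_coe, mem_filter, mem_product, mem_range] at hi ⊢
      exact ⟨⟨⟨by omega, by omega⟩, by omega,
        by rw [testBit_two_mul_succ]; exact hi.2, testBit_two_mul_zero k⟩, trivial⟩
    · intro p h; obtain ⟨a, b⟩ := p
      simp only [Finset.mem_coe, mem_filter, mem_product, mem_range] at h
      obtain ⟨⟨⟨ha, hb⟩, hba, hta, htb⟩, hb0⟩ := h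
      simp only [Prod.mk.injEq]
      omega
    · intro i _
      simp
  have hc : ((((Finset.range (M+1) ×ˢ Finset.range (M+1)).filter
      (fun p => p.2 < p.1 ∧ (2*k).testBit p.1 = true ∧ (2*k).testBit p.2 = false)).filter
      (fun p => ¬ p.2 = 0)).card) = C k M := by
    unfold C
    apply Finset.card_nbij' (fun p => (p.1 - 1, p.2 - 1)) (fun p => (p.1 + 1, p.2 + 1))
    · intro p h; obtain ⟨a, b⟩ := p
      simp only [Finset.mem_coe, mem_filter, mem_product, mem_range] at h ⊢
      obtain ⟨⟨⟨ha, hb⟩, hba, hta, htb⟩, hb0⟩ := h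
      have h1 : (2 * k).testBit a = k.testBit (a - 1) := by
        conv_lhs => rw [show a = (a - 1) + 1 by omega]
        exact testBit_two_mul_succ k (a - 1)
      have h2 : (2 * k).testBit b = k.testBit (b - 1) := by
        conv_lhs => rw [show b = (b - 1) + 1 by omega]
        exact testBit_two_mul_succ k (b - 1)
      rw [h1] at hta; rw [h2] at htb
      exact ⟨⟨by omega, by omega⟩, by omega, hta, htb⟩
    · intro p h; obtain ⟨a, b⟩ := p
      simp only [Finset.mem_coe, mem_filter, mem_product, mem_range] at h ⊢
      obtain ⟨⟨ha, hb⟩, hba, hta, htb⟩ := h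
      rw [← testBit_two_mul_succ k a] at hta
      rw [← testBit_two_mul_succ k b] at htb
      exact ⟨⟨⟨by omega, by omega⟩, by omega, hta, htb⟩, by omega⟩
    · intro p h; obtain ⟨a, b⟩ := p
      simp only [Finset.mem_coe, mem_filter, mem_product, mem_range] at h
      obtain ⟨⟨⟨ha, hb⟩, hba, hta, htb⟩, hb0⟩ := h
      simp only [Prod.mk.injEq]
      omega
    · rintro ⟨a, b⟩ _
      simp only [Prod.mk.injEq]
      omega
  rw [hz, hc]
  unfold C
  omega

lemma inv2_eq_C (n : ℕ) : inv2 n = C n (n + 1) := rfl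

lemma lt_of_testBit {n i : ℕ} (h : n.testBit i = true) : i < n + 1 :=
  Nat.lt_succ_of_le (le_trans (Nat.lt_two_pow_self (n := i)).le (Nat.ge_two_pow_of_testBit h))

lemma C_eq_of_le {n M M' : ℕ} (h : n + 1 ≤ M) (h' : M ≤ M') : C n M' = C n M := by
  unfold C
  congr 1
  ext ⟨a, b⟩
  simp only [mem_filter, mem_product, mem_range]
  constructor
  · rintro ⟨⟨ha, hb⟩, hba, hta, htb⟩
    have ha' : a < M := lt_of_lt_of_le (lt_of_testBit hta) h
    exact ⟨⟨ha', lt_trans hba ha'⟩, hba, hta, htb⟩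
  · rintro ⟨⟨ha, hb⟩, hba, hta, htb⟩
    exact ⟨⟨lt_of_lt_of_le ha h', lt_of_lt_of_le hb h'⟩, hba, hta, htb⟩

lemma Z_eq_of_le {n M M' : ℕ} (h : n + 1 ≤ M) (h' : M ≤ M') : Z n M' = Z n M := by
  unfold Z
  congr 1
  ext i
  simp only [mem_filter, mem_range]
  constructor
  · rintro ⟨hi, ht⟩
    exact ⟨lt_of_lt_of_le (lt_of_testBit ht) h, ht⟩
  · rintro ⟨hi, ht⟩
    exact ⟨lt_of_lt_of_le hi h', ht⟩

lemma Z_even (k M : ℕ) : Z (2 * k) (M + 1) = Z k M := by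
  unfold Z
  apply Finset.card_nbij' (fun i => i - 1) (fun i => i + 1)
  · intro a ha
    simp only [Finset.mem_coe, mem_filter, mem_range] at ha ⊢
    obtain ⟨ha1, ha2⟩ := ha
    have hne : a ≠ 0 := by
      rintro rfl
      rw [testBit_two_mul_zero] at ha2; exact Bool.false_ne_true ha2
    obtain ⟨i, rfl⟩ := Nat.exists_eq_succ_of_ne_zero hne
    rw [testBit_two_mul_succ] at ha2
    exact ⟨by omega, by simpa using ha2⟩
  · intro i hi
    simp only [Finset.mem_coe, mem_filter, mem_range] at hi ⊢
    exact ⟨by omega, by rw [testBit_two_mul_succ]; exact hi.2⟩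
  · intro a ha
    simp only [Finset.mem_coe, mem_filter, mem_range] at ha
    have : a ≠ 0 := by
      rintro rfl
      rw [testBit_two_mul_zero] at ha; exact Bool.false_ne_true ha.2
    dsimp only; omega
  · intro i _; dsimp only; omega

lemma Z_odd (k M : ℕ) : Z (2 * k + 1) (M + 1) = Z k M + 1 := by
  unfold Z
  set T := (Finset.range (M + 1)).filter (fun i => (2 * k + 1).testBit i = true) with hT
  have h0 : 0 ∈ T := by
    simp only [Finset.mem_coe, hT, mem_filter, mem_range]
    exact ⟨Nat.succ_pos M, testBit_two_mul_add_one_zero k⟩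
  have hcard : (T.erase 0).card = Z k M := by
    apply Finset.card_nbij' (fun i => i - 1) (fun i => i + 1)
    · intro a ha
      simp only [Finset.mem_coe, hT, Finset.mem_erase, mem_filter, mem_range] at ha
      obtain ⟨hne, ha1, ha2⟩ := ha
      obtain ⟨i, rfl⟩ := Nat.exists_eq_succ_of_ne_zero hne
      rw [testBit_two_mul_add_one_succ] at ha2
      simp only [Finset.mem_coe, Z, mem_filter, mem_range]
      exact ⟨by omega, by simpa using ha2⟩
    · intro i hi
      simp only [Finset.mem_coe, Z, mem_filter, mem_range] at hi
      simp only [Finset.mem_coe, hT, Finset.mem_erase, mem_filter, mem_range]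
      exact ⟨by omega, by omega, by rw [testBit_two_mul_add_one_succ]; exact hi.2⟩
    · intro a ha
      simp only [Finset.mem_coe, Finset.mem_erase] at ha
      dsimp only; omega
    · intro i _; dsimp only; omega
  have hce := Finset.card_erase_of_mem h0
  unfold Z at hcard
  have hpos : 0 < T.card := Finset.card_pos.mpr ⟨0, h0⟩
  omega

/-- parity of the number of one bits -/
def zpar (k : ℕ) : ℤ := (-1) ^ Z k (k + 1)

lemma iSeq_odd (k : ℕ) : iSeq (2 * k + 1) = iSeq k := by
  unfold iSeq
  congr 1
  rw [inv2_eq_C, inv2_eq_C, show (2 * k + 1 + 1 : ℕ) = (2 * k + 1) + 1 from rfl, C_odd]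
  exact C_eq_of_le le_rfl (by omega)

lemma iSeq_even (k : ℕ) : iSeq (2 * k) = zpar k * iSeq k := by
  rcases Nat.eq_zero_or_pos k with rfl | hk
  · decide
  · unfold iSeq zpar
    rw [← pow_add]
    congr 1
    rw [inv2_eq_C, show (2 * k + 1 : ℕ) = (2 * k) + 1 from rfl, C_even]
    rw [C_eq_of_le le_rfl (by omega : k + 1 ≤ 2 * k),
        Z_eq_of_le le_rfl (by omega : k + 1 ≤ 2 * k), inv2_eq_C]
    omega

lemma zpar_even (k : ℕ) : zpar (2 * k) = zpar k := by
  unfold zpar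
  congr 1
  rw [show (2 * k + 1 : ℕ) = (2 * k) + 1 from rfl, Z_even]
  rcases Nat.eq_zero_or_pos k with rfl | hk
  · rfl
  · exact Z_eq_of_le le_rfl (by omega)

lemma zpar_odd (k : ℕ) : zpar (2 * k + 1) = -zpar k := by
  unfold zpar
  rw [show (2 * k + 1 + 1 : ℕ) = (2 * k + 1) + 1 from rfl, Z_odd,
      Z_eq_of_le le_rfl (by omega : k + 1 ≤ 2 * k + 1), pow_succ]
  ring

lemma zpar_sq (k : ℕ) : zpar k * zpar k = 1 := by
  unfold zpar
  rw [← pow_add]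
  exact Even.neg_one_pow ⟨Z k (k + 1), rfl⟩

lemma iSeq4_0 (k : ℕ) : iSeq (4 * k) = iSeq k := by
  rw [show (4 * k : ℕ) = 2 * (2 * k) by ring, iSeq_even, zpar_even, iSeq_even,
      ← mul_assoc, zpar_sq, one_mul]

lemma iSeq4_1 (k : ℕ) : iSeq (4 * k + 1) = zpar k * iSeq k := by
  rw [show (4 * k + 1 : ℕ) = 2 * (2 * k) + 1 by ring, iSeq_odd, iSeq_even]

lemma iSeq4_2 (k : ℕ) : iSeq (4 * k + 2) = -(zpar k * iSeq k) := by
  rw [show (4 * k + 2 : ℕ) = 2 * (2 * k + 1) by ring, iSeq_even, zpar_odd, iSeq_odd, neg_mul]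

lemma iSeq4_3 (k : ℕ) : iSeq (4 * k + 3) = iSeq k := by
  rw [show (4 * k + 3 : ℕ) = 2 * (2 * k + 1) + 1 by ring, iSeq_odd, iSeq_odd]

lemma S_succ (m : ℕ) : S (m + 1) = S m + iSeq (m + 1) := by
  unfold S
  exact Finset.sum_range_succ _ _

lemma S_four (k : ℕ) : S (4 * k + 3) = 2 * S k := by
  induction k with
  | zero => decide
  | succ j ih =>
    have h1 : S (4 * j + 4) = S (4 * j + 3) + iSeq (4 * j + 4) := by
      rw [show (4 * j + 4 : ℕ) = (4 * j + 3) + 1 by ring]; exact S_succ _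
    have h2 : S (4 * j + 5) = S (4 * j + 4) + iSeq (4 * j + 5) := by
      rw [show (4 * j + 5 : ℕ) = (4 * j + 4) + 1 by ring]; exact S_succ _
    have h3 : S (4 * j + 6) = S (4 * j + 5) + iSeq (4 * j + 6) := by
      rw [show (4 * j + 6 : ℕ) = (4 * j + 5) + 1 by ring]; exact S_succ _
    have h4 : S (4 * j + 7) = S (4 * j + 6) + iSeq (4 * j + 7) := by
      rw [show (4 * j + 7 : ℕ) = (4 * j + 6) + 1 by ring]; exact S_succ _
    have e4 : iSeq (4 * j + 4) = iSeq (j + 1) := by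
      rw [show (4 * j + 4 : ℕ) = 4 * (j + 1) by ring, iSeq4_0]
    have e5 : iSeq (4 * j + 5) = zpar (j + 1) * iSeq (j + 1) := by
      rw [show (4 * j + 5 : ℕ) = 4 * (j + 1) + 1 by ring, iSeq4_1]
    have e6 : iSeq (4 * j + 6) = -(zpar (j + 1) * iSeq (j + 1)) := by
      rw [show (4 * j + 6 : ℕ) = 4 * (j + 1) + 2 by ring, iSeq4_2]
    have e7 : iSeq (4 * j + 7) = iSeq (j + 1) := by
      rw [show (4 * j + 7 : ℕ) = 4 * (j + 1) + 3 by ring, iSeq4_3]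
    have hs : S (j + 1) = S j + iSeq (j + 1) := S_succ j
    rw [show (4 * (j + 1) + 3 : ℕ) = 4 * j + 7 by ring]
    rw [h4, h3, h2, h1, ih, e4, e5, e6, e7, hs]
    ring

lemma iSeq_pm (m : ℕ) : iSeq m = 1 ∨ iSeq m = -1 := by
  unfold iSeq
  rcases Nat.even_or_odd (inv2 m) with h | h
  · exact Or.inl (Even.neg_one_pow h)
  · exact Or.inr (Odd.neg_one_pow h)

lemma zpar_pm (m : ℕ) : zpar m = 1 ∨ zpar m = -1 := by
  unfold zpar
  rcases Nat.even_or_odd (Z m (m + 1)) with h | h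
  · exact Or.inl (Even.neg_one_pow h)
  · exact Or.inr (Odd.neg_one_pow h)

end Aux

theorem summatory_div_four_bounds (n : ℕ) (hn : 1 ≤ n) :
    ((S n : ℚ) - 2) / 2 ≤ (S (n / 4) : ℚ) ∧ (S (n / 4) : ℚ) ≤ ((S n : ℚ) + 2) / 2 := by
  -- key integer estimate: |S n - 2 * S (n / 4)| ≤ 2
  have key : S n - 2 ≤ 2 * S (n / 4) ∧ 2 * S (n / 4) ≤ S n + 2 := by
    rcases Nat.lt_or_ge n 4 with h4 | h4
    · interval_cases n <;> exact ⟨by decide, by decide⟩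
    · set q := n / 4 with hq
      have hq1 : 1 ≤ q := by omega
      obtain ⟨j, hj⟩ : ∃ j, q = j + 1 := ⟨q - 1, by omega⟩
      have hr : n % 4 < 4 := Nat.mod_lt _ (by norm_num)
      have hn4 : n = 4 * q + n % 4 := by omega
      have h3 : S (4 * q + 3) = 2 * S q := S_four q
      have h0 : S (4 * q) = 2 * S q - iSeq q := by
        have hb : S (4 * j + 3) = 2 * S j := S_four j
        have hstep : S (4 * q) = S (4 * j + 3) + iSeq (4 * q) := by
          rw [hj, show (4 * (j + 1) : ℕ) = (4 * j + 3) + 1 by ring]; exact S_succ _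
        have hi : iSeq (4 * q) = iSeq q := iSeq4_0 q
        have hsq : S q = S j + iSeq q := by rw [hj]; exact S_succ j
        rw [hstep, hb, hi, hsq]; ring
      have h1 : S (4 * q + 1) = 2 * S q - iSeq q + zpar q * iSeq q := by
        have : S (4 * q + 1) = S (4 * q) + iSeq (4 * q + 1) := S_succ _
        rw [this, h0, iSeq4_1]
      have h2 : S (4 * q + 2) = 2 * S q - iSeq q := by
        have : S (4 * q + 2) = S (4 * q + 1) + iSeq (4 * q + 2) := S_succ _
        rw [this, h1, iSeq4_2]; ring
      rcases iSeq_pm q with hi | hi <;> rcases zpar_pm q with hz | hz <;>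
        · interval_cases h : (n % 4) <;>
          · rw [hn4]
            first
            | (rw [show (4 * q + 0 : ℕ) = 4 * q from rfl, h0, hi]; omega)
            | (rw [h1, hi, hz]; omega)
            | (rw [h2, hi]; omega)
            | (rw [h3]; omega)
  obtain ⟨k1, k2⟩ := key
  constructor
  · have : (S n : ℚ) - 2 ≤ 2 * (S (n / 4) : ℚ) := by exact_mod_cast k1
    linarith
  · have : 2 * (S (n / 4) : ℚ) ≤ (S n : ℚ) + 2 := by exact_mod_cast k2
    linarith
end
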